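/- Let D ⊂ ℝⁿ be open, f : D → ℝ continuously differentiable, K ⊂ D compact, and let xₖ ∈ K be a sequence with gₖ = ∇f(xₖ) satisfying f(x_{k+1}) ≤ f(xₖ − σgₖ) for every σ ∈ ℝ with xₖ − σgₖ ∈ D. Then gₖ → 0 as k → ∞. -/

import Mathlib

open Filter Metric Set Topology

/-- Line-search convergence lemma: if each iterate decreases `f` at least as much as the
best gradient step, the gradients converge to zero. -/
theorem stmt_12 {n : ℕ} (D : Set (EuclideanSpace ℝ (Fin n))) (hD : IsOpen D)
    (f : EuclideanSpace ℝ (Fin n) → ℝ) (hf : ContDiffOn ℝ 1 f D)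
    (K : Set (EuclideanSpace ℝ (Fin n))) (hK : IsCompact K) (hKD : K ⊆ D)
    (x : ℕ → EuclideanSpace ℝ (Fin n)) (hx : ∀ k, x k ∈ K)
    (g : ℕ → EuclideanSpace ℝ (Fin n)) (hg : ∀ k, g k = gradient f (x k))
    (hstep : ∀ k, ∀ σ : ℝ, x k - σ • g k ∈ D → f (x (k + 1)) ≤ f (x k - σ • g k)) :
    Tendsto g atTop (nhds 0) := by
  classical
  set G := gradient f with hGdef
  have hGc : ContinuousOn G D := by
    have h1 : ContinuousOn (fderiv ℝ f) D := hf.continuousOn_fderiv_of_isOpen hD le_rfl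
    exact (InnerProductSpace.toDual ℝ _).symm.continuous.comp_continuousOn h1
  have hdiff : ∀ y ∈ D, DifferentiableAt ℝ f y := fun y hy =>
    (hf.contDiffAt (hD.mem_nhds hy)).differentiableAt one_ne_zero
  have hgrad : ∀ y ∈ D, HasGradientAt f (G y) y := fun y hy => (hdiff y hy).hasGradientAt
  obtain ⟨r, hr, hrD⟩ := hK.exists_cthickening_subset_open hD hKD
  set K' := cthickening r K with hK'def
  have hK'c : IsCompact K' := hK.cthickening
  have hKK' : K ⊆ K' := self_subset_cthickening K
  have hUC : UniformContinuousOn G K' := hK'c.uniformContinuousOn_of_continuous (hGc.mono hrD)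
  have hmono : ∀ k, f (x (k + 1)) ≤ f (x k) := by
    intro k
    have := hstep k 0 (by simpa using hKD (hx k))
    simpa using this
  have hF : Antitone fun k => f (x k) := antitone_nat_of_succ_le hmono
  have hfc : ContinuousOn f K := hf.continuousOn.mono hKD
  have hbdd : BddBelow (range fun k => f (x k)) := by
    obtain ⟨m, hm⟩ := (hK.image_of_continuousOn hfc).bddBelow
    refine ⟨m, ?_⟩
    rintro v ⟨k, rfl⟩
    exact hm ⟨x k, hx k, rfl⟩
  have hlim : Tendsto (fun k => f (x k)) atTop (𝓝 (⨅ k, f (x k))) :=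
    tendsto_atTop_ciInf hF hbdd
  have hlim' : Tendsto (fun k => f (x (k + 1))) atTop (𝓝 (⨅ k, f (x k))) :=
    hlim.comp (tendsto_add_atTop_nat 1)
  have hdiff0 : Tendsto (fun k => f (x k) - f (x (k + 1))) atTop (𝓝 0) := by
    simpa using hlim.sub hlim'
  refine NormedAddCommGroup.tendsto_nhds_zero.mpr fun ε hε => ?_
  obtain ⟨δ, hδ, hδuc⟩ := Metric.uniformContinuousOn_iff.mp hUC (ε / 2) (by positivity)
  set δ' : ℝ := min δ r / 2 with hδ'def
  have hδ'pos : 0 < δ' := by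
    have : 0 < min δ r := lt_min hδ hr
    positivity
  have hδ'ltδ : δ' < δ := by
    have h1 := min_le_left δ r
    rw [hδ'def]; linarith
  have hδ'ler : δ' ≤ r := by
    have h1 := min_le_right δ r
    rw [hδ'def]; linarith
  set c : ℝ := ε / 2 * δ' with hcdef
  have hcpos : 0 < c := by positivity
  -- key decrease estimate
  have key : ∀ k, ε ≤ ‖g k‖ → c ≤ f (x k) - f (x (k + 1)) := by
    intro k hk
    have hgk0 : 0 < ‖g k‖ := lt_of_lt_of_le hε hk
    set σ : ℝ := δ' / ‖g k‖ with hσdef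
    have hσpos : 0 < σ := by positivity
    have hmemK' : ∀ t ∈ Icc (0 : ℝ) σ, x k - t • g k ∈ K' := by
      intro t ht
      apply mem_cthickening_of_dist_le _ (x k) r K (hx k)
      have : dist (x k - t • g k) (x k) = t * ‖g k‖ := by
        rw [dist_eq_norm]
        simp [norm_smul, abs_of_nonneg ht.1]
      rw [this]
      calc t * ‖g k‖ ≤ σ * ‖g k‖ := by nlinarith [ht.2]
        _ = δ' := by rw [hσdef]; field_simp [hgk0.ne']
        _ ≤ r := hδ'ler
    have hmemD : ∀ t ∈ Icc (0 : ℝ) σ, x k - t • g k ∈ D := fun t ht => hrD (hmemK' t ht)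
    set φ : ℝ → ℝ := fun t => f (x k - t • g k) + ε / 2 * ‖g k‖ * t with hφdef
    have hcurve : ∀ t : ℝ, HasDerivAt (fun s : ℝ => x k - s • g k) (-(g k)) t := by
      intro t
      simpa using ((hasDerivAt_id t).smul_const (g k)).const_sub (x k)
    have hφderiv : ∀ t ∈ Icc (0 : ℝ) σ,
        HasDerivAt φ (-(inner ℝ (G (x k - t • g k)) (g k) : ℝ) + ε / 2 * ‖g k‖) t := by
      intro t ht
      have h1 : HasDerivAt (fun s : ℝ => f (x k - s • g k))
          (-(inner ℝ (G (x k - t • g k)) (g k) : ℝ)) t := by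
        have := ((hgrad _ (hmemD t ht)).hasFDerivAt).comp_hasDerivAt t (hcurve t)
        simpa [InnerProductSpace.toDual_apply_apply, inner_neg_right, Function.comp_def] using this
      simpa [hφdef, Pi.add_def] using h1.add (((hasDerivAt_id t).const_mul (ε / 2 * ‖g k‖)))
    have hanti : AntitoneOn φ (Icc 0 σ) := by
      apply antitoneOn_of_deriv_nonpos (convex_Icc 0 σ)
      · exact fun t ht => ((hφderiv t ht).continuousAt).continuousWithinAt
      · intro t ht
        rw [interior_Icc] at ht
        exact ((hφderiv t ⟨ht.1.le, ht.2.le⟩).differentiableAt).differentiableWithinAt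
      · intro t ht
        rw [interior_Icc] at ht
        have htIcc : t ∈ Icc (0 : ℝ) σ := ⟨ht.1.le, ht.2.le⟩
        rw [(hφderiv t htIcc).deriv]
        -- uniform continuity bound
        have hdist : dist (x k - t • g k) (x k) < δ := by
          have : dist (x k - t • g k) (x k) = t * ‖g k‖ := by
            rw [dist_eq_norm]; simp [norm_smul, abs_of_nonneg ht.1.le]
          rw [this]
          calc t * ‖g k‖ ≤ σ * ‖g k‖ := by nlinarith [htIcc.2]
            _ = δ' := by rw [hσdef]; field_simp [hgk0.ne']
            _ < δ := hδ'ltδ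
        have hGclose : ‖G (x k - t • g k) - G (x k)‖ < ε / 2 := by
          have := hδuc _ (hmemK' t htIcc) _ (hKK' (hx k)) hdist
          rwa [dist_eq_norm] at this
        have hinner : (inner ℝ (G (x k)) (g k) : ℝ) = ‖g k‖ ^ 2 := by
          rw [← hg k, real_inner_self_eq_norm_sq]
        have hsplit : (inner ℝ (G (x k - t • g k)) (g k) : ℝ)
            = inner ℝ (G (x k)) (g k) + inner ℝ (G (x k - t • g k) - G (x k)) (g k) := by
          rw [inner_sub_left]; ring
        have hcs : |(inner ℝ (G (x k - t • g k) - G (x k)) (g k) : ℝ)|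
            ≤ ‖G (x k - t • g k) - G (x k)‖ * ‖g k‖ := abs_real_inner_le_norm _ _
        have hge : (inner ℝ (G (x k - t • g k)) (g k) : ℝ) ≥ ε / 2 * ‖g k‖ := by
          rw [hsplit, hinner]
          have h1 : -(‖G (x k - t • g k) - G (x k)‖ * ‖g k‖)
              ≤ (inner ℝ (G (x k - t • g k) - G (x k)) (g k) : ℝ) := neg_abs_le _ |>.trans' (by
                exact neg_le_neg hcs)
          nlinarith [hGclose, hgk0, hk]
        linarith
    have hφle : φ σ ≤ φ 0 := hanti ⟨le_rfl, hσpos.le⟩ ⟨hσpos.le, le_rfl⟩ hσpos.le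
    have hφ0 : φ 0 = f (x k) := by simp [hφdef]
    have hφσ : φ σ = f (x k - σ • g k) + c := by
      have hgs : ‖g k‖ * σ = δ' := by rw [hσdef]; field_simp [hgk0.ne']
      have h2 : ε / 2 * ‖g k‖ * σ = c := by rw [hcdef, mul_assoc, hgs]
      simp only [hφdef, h2]
    have hstepσ := hstep k σ (hmemD σ ⟨hσpos.le, le_rfl⟩)
    have : f (x k - σ • g k) + c ≤ f (x k) := by rw [← hφσ, ← hφ0]; exact hφle
    linarith
  -- conclude
  have hev : ∀ᶠ k in atTop, f (x k) - f (x (k + 1)) < c := by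
    have := hdiff0.eventually (eventually_lt_nhds hcpos)
    simpa using this
  filter_upwards [hev] with k hkev
  by_contra h
  push_neg at h
  exact absurd hkev (not_lt.mpr (key k h))
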